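/- arXiv:0707.0048 — 2 statements merged into one kernel-verified Lean document; each statement's English description precedes it below -/
import Mathlib

section
/- Let 𝖧 be a complex Hilbert space. For an n-channel system triple G = (S, L, H) define the (1+n)×(1+n) block matrix of bounded operators V(G) := [[ −iH − ½L†L , −L†S ], [ L , S − I ]] (scalar block in the (0,0) corner, row vector −L†S, column vector L, and n×n block S − I), and let P be the (1+n)×(1+n) diagonal matrix whose (0,0) entry is 0 and whose remaining n diagonal entries are the identity operator. If G₁ = (S₁, L₁, H₁) and G₂ = (S₂, L₂, H₂) are n-channel triples and S₂ is an isometry (S₂†S₂ = I), then V(G₂ ◁ G₁) = V(G₁) + V(G₂) + V(G₂) · P · V(G₁). Equivalently (the Itô-product identity dG = dG₁ + dG₂ + dG₂dG₁ for the generator coefficients): the coefficient matrices satisfy G^{αβ} = G₁^{αβ} + G₂^{αβ} + G₂^{α1}G₁^{1β}, where G^{11} = S − I, G^{10} = L, G^{01} = −L†S, G^{00} = −iH − ½L†L. -/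
/- Series product of quantum system triples (Gough–James), Theorem 2 (existence part):
the cascade G₂ ◁ G₁ is parametrically equivalent to G₁ ◁ G₂′ with
S₂′ = S₁† S₂ S₁, L₂′ = S₁†(S₂ − I)L₁ + S₁† L₂,
H₂′ = H₂ + Im{ L₂†(S₂ + I)L₁ − L₁† S₂ L₁ }. -/

noncomputable section

open Matrix

variable {E : Type*} [NormedAddCommGroup E] [InnerProductSpace ℂ E] [CompleteSpace E]

/-- `L₂† S L₁ = Σ_{j,k} (L₂ j)* (S j k) (L₁ k)`. -/
def quadForm {n : ℕ} (L₂ : Fin n → (E →L[ℂ] E)) (S : Matrix (Fin n) (Fin n) (E →L[ℂ] E))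
    (L₁ : Fin n → (E →L[ℂ] E)) : E →L[ℂ] E :=
  ∑ j, ∑ k, star (L₂ j) * S j k * L₁ k

/-- Scattering-matrix component of the series product `G₂ ◁ G₁`. -/
def seriesS {n : ℕ} (S₂ S₁ : Matrix (Fin n) (Fin n) (E →L[ℂ] E)) :
    Matrix (Fin n) (Fin n) (E →L[ℂ] E) := S₂ * S₁

/-- Coupling-vector component of the series product `G₂ ◁ G₁`: `L₂ + S₂ L₁`. -/
def seriesL {n : ℕ} (S₂ : Matrix (Fin n) (Fin n) (E →L[ℂ] E))
    (L₂ L₁ : Fin n → (E →L[ℂ] E)) : Fin n → (E →L[ℂ] E) :=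
  fun j => L₂ j + S₂.mulVec L₁ j

/-- Hamiltonian component of the series product `G₂ ◁ G₁`:
`H₁ + H₂ + (1/(2i))(L₂†S₂L₁ − L₁†S₂†L₂)`. -/
def seriesH {n : ℕ} (S₂ : Matrix (Fin n) (Fin n) (E →L[ℂ] E))
    (L₂ L₁ : Fin n → (E →L[ℂ] E)) (H₁ H₂ : E →L[ℂ] E) : E →L[ℂ] E :=
  H₁ + H₂ + ((2 * Complex.I)⁻¹) • (quadForm L₂ S₂ L₁ - star (quadForm L₂ S₂ L₁))

/-- `Im X = (X − X†)/(2i)`. -/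
def opIm (X : E →L[ℂ] E) : E →L[ℂ] E := ((2 * Complex.I)⁻¹) • (X - star X)


/-- The (1+n)×(1+n) generator-coefficient matrix
`V(G) = [[ −iH − ½L†L , −L†S ], [ L , S − I ]]`, indexed by `Fin 1 ⊕ Fin n`
with the scalar block in the (0,0) corner. -/
def Vmat {n : ℕ} (S : Matrix (Fin n) (Fin n) (E →L[ℂ] E)) (L : Fin n → (E →L[ℂ] E))
    (H : E →L[ℂ] E) : Matrix (Fin 1 ⊕ Fin n) (Fin 1 ⊕ Fin n) (E →L[ℂ] E) :=
  Matrix.fromBlocks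
    (Matrix.of fun _ _ => -(Complex.I • H) - (2 : ℂ)⁻¹ • ∑ k, star (L k) * L k)
    (Matrix.of fun _ k => -∑ j, star (L j) * S j k)
    (Matrix.of fun j _ => L j)
    (S - 1)

/-- The diagonal projection `P` with (0,0) entry `0` and the remaining `n`
diagonal entries equal to the identity. -/
def Pmat (E : Type*) [NormedAddCommGroup E] [InnerProductSpace ℂ E] [CompleteSpace E]
    (n : ℕ) : Matrix (Fin 1 ⊕ Fin n) (Fin 1 ⊕ Fin n) (E →L[ℂ] E) :=
  Matrix.fromBlocks 0 0 0 1


/-- Auxiliary: the column matrix of a coupling vector. -/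
def colM {n : ℕ} (L : Fin n → (E →L[ℂ] E)) : Matrix (Fin n) (Fin 1) (E →L[ℂ] E) :=
  Matrix.of fun j _ => L j

lemma rowM_eq {n : ℕ} (S : Matrix (Fin n) (Fin n) (E →L[ℂ] E)) (L : Fin n → (E →L[ℂ] E)) :
    (Matrix.of fun _ k => -∑ j, star (L j) * S j k : Matrix (Fin 1) (Fin n) (E →L[ℂ] E)) =
      -((colM L)ᴴ * S) := by
  ext i k
  simp [colM, Matrix.mul_apply, Matrix.conjTranspose_apply]

lemma colM_series {n : ℕ} (S₂ : Matrix (Fin n) (Fin n) (E →L[ℂ] E))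
    (L₂ L₁ : Fin n → (E →L[ℂ] E)) :
    colM (seriesL S₂ L₂ L₁) = colM L₂ + S₂ * colM L₁ := by
  ext j i
  simp [colM, seriesL, Matrix.mul_apply, Matrix.mulVec, dotProduct]

lemma sumLL_eq {n : ℕ} (L : Fin n → (E →L[ℂ] E)) (i j : Fin 1) :
    (∑ k, star (L k) * L k) = ((colM L)ᴴ * colM L) i j := by
  simp [colM, Matrix.mul_apply, Matrix.conjTranspose_apply]

lemma quadForm_eq {n : ℕ} (L₂ : Fin n → (E →L[ℂ] E)) (S : Matrix (Fin n) (Fin n) (E →L[ℂ] E))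
    (L₁ : Fin n → (E →L[ℂ] E)) (i j : Fin 1) :
    quadForm L₂ S L₁ = ((colM L₂)ᴴ * (S * colM L₁)) i j := by
  simp [quadForm, colM, Matrix.mul_apply, Matrix.conjTranspose_apply, Finset.mul_sum, mul_assoc]

/- Gough–James, equation (12) / Appendix B: the Itô-product identity
`V(G₂ ◁ G₁) = V(G₁) + V(G₂) + V(G₂)·P·V(G₁)` when `S₂` is an isometry. -/
theorem Vmat_series {n : ℕ}
    (S₁ S₂ : Matrix (Fin n) (Fin n) (E →L[ℂ] E)) (L₁ L₂ : Fin n → (E →L[ℂ] E))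
    (H₁ H₂ : E →L[ℂ] E)
    (hS₂ : S₂ᴴ * S₂ = 1)
    (hH₁ : IsSelfAdjoint H₁) (hH₂ : IsSelfAdjoint H₂) :
    Vmat (seriesS S₂ S₁) (seriesL S₂ L₂ L₁) (seriesH S₂ L₂ L₁ H₁ H₂) =
      Vmat S₁ L₁ H₁ + Vmat S₂ L₂ H₂ + Vmat S₂ L₂ H₂ * Pmat E n * Vmat S₁ L₁ H₁ := by
  unfold Vmat Pmat seriesS seriesH
  rw [Matrix.fromBlocks_multiply, Matrix.fromBlocks_multiply,
    Matrix.fromBlocks_add, Matrix.fromBlocks_add]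
  simp only [Matrix.mul_zero, Matrix.zero_mul, zero_add, add_zero, Matrix.mul_one]
  rw [Matrix.fromBlocks_inj]
  refine ⟨?_, ?_, ?_, by noncomm_ring⟩
  · -- (0,0) block
    have hr : (∑ k, (-∑ j, star (L₂ j) * S₂ j k) * L₁ k) = -quadForm L₂ S₂ L₁ := by
      rw [quadForm, Finset.sum_comm]
      simp [Finset.sum_mul]
    have he : (∑ k, star (seriesL S₂ L₂ L₁ k) * seriesL S₂ L₂ L₁ k)
        = (∑ k, star (L₁ k) * L₁ k) + (∑ k, star (L₂ k) * L₂ k)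
          + quadForm L₂ S₂ L₁ + star (quadForm L₂ S₂ L₁) := by
      rw [sumLL_eq _ 0 0, colM_series]
      have expand : (colM L₂ + S₂ * colM L₁)ᴴ * (colM L₂ + S₂ * colM L₁)
          = (colM L₁)ᴴ * ((S₂ᴴ * S₂) * colM L₁) + (colM L₂)ᴴ * colM L₂
            + (colM L₂)ᴴ * (S₂ * colM L₁) + ((colM L₂)ᴴ * (S₂ * colM L₁))ᴴ := by
        simp only [Matrix.conjTranspose_add, Matrix.conjTranspose_mul,
          Matrix.conjTranspose_conjTranspose, Matrix.add_mul, Matrix.mul_add,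
          Matrix.mul_assoc]
        abel
      rw [expand, hS₂, Matrix.one_mul]
      simp only [Matrix.add_apply]
      rw [← sumLL_eq, ← sumLL_eq, ← quadForm_eq, Matrix.conjTranspose_apply, ← quadForm_eq]
    have hs : ∀ x : E →L[ℂ] E, Complex.I • ((2 * Complex.I)⁻¹ • x) = (2 : ℂ)⁻¹ • x := by
      intro x
      rw [smul_smul, _root_.mul_inv_rev, ← mul_assoc,
        mul_inv_cancel₀ Complex.I_ne_zero, one_mul]
    refine Matrix.ext fun i j => ?_
    simp only [Matrix.add_apply, Matrix.mul_apply, Matrix.of_apply]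
    rw [he, hr, smul_add, smul_add, hs]
    module
  · -- (0,1) block
    rw [rowM_eq, rowM_eq, rowM_eq, colM_series, Matrix.conjTranspose_add,
      Matrix.conjTranspose_mul]
    have h1 : ((colM L₂)ᴴ + (colM L₁)ᴴ * S₂ᴴ) * (S₂ * S₁)
        = (colM L₂)ᴴ * (S₂ * S₁) + (colM L₁)ᴴ * (S₂ᴴ * S₂) * S₁ := by
      simp only [Matrix.add_mul, Matrix.mul_assoc]
    rw [h1, hS₂, Matrix.mul_one]
    simp only [Matrix.mul_sub, Matrix.mul_one, Matrix.neg_mul, Matrix.mul_assoc, neg_add_rev]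
    abel
  · -- (1,0) block
    show colM (seriesL S₂ L₂ L₁) = colM L₁ + colM L₂ + (S₂ - 1) * colM L₁
    rw [colM_series, Matrix.sub_mul, Matrix.one_mul]
    abel
end
end

section
/- Let 𝖧 be a complex Hilbert space and let G₁ = (S₁, L₁, H₁), G₂ = (S₂, L₂, H₂), G₃ = (S₃, L₃, H₃) be three n-channel system triples such that S₃ is an isometry (S₃†S₃ = I). Then the series product is associative: (G₃ ◁ G₂) ◁ G₁ = G₃ ◁ (G₂ ◁ G₁), componentwise in the scattering matrix, the coupling vector, and the Hamiltonian. -/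
/- Series product of quantum system triples (Gough–James), Theorem 2 (existence part):
the cascade G₂ ◁ G₁ is parametrically equivalent to G₁ ◁ G₂′ with
S₂′ = S₁† S₂ S₁, L₂′ = S₁†(S₂ − I)L₁ + S₁† L₂,
H₂′ = H₂ + Im{ L₂†(S₂ + I)L₁ − L₁† S₂ L₁ }. -/

noncomputable section

open Matrix

variable {E : Type*} [NormedAddCommGroup E] [InnerProductSpace ℂ E] [CompleteSpace E]

lemma quadForm_add_left {n : ℕ} (A B : Fin n → (E →L[ℂ] E))
    (S : Matrix (Fin n) (Fin n) (E →L[ℂ] E)) (L : Fin n → (E →L[ℂ] E)) :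
    quadForm (fun j => A j + B j) S L = quadForm A S L + quadForm B S L := by
  simp [quadForm, star_add, add_mul, Finset.sum_add_distrib]

lemma quadForm_add_right {n : ℕ} (L : Fin n → (E →L[ℂ] E))
    (S : Matrix (Fin n) (Fin n) (E →L[ℂ] E)) (A B : Fin n → (E →L[ℂ] E)) :
    quadForm L S (fun j => A j + B j) = quadForm L S A + quadForm L S B := by
  simp [quadForm, mul_add, Finset.sum_add_distrib]

lemma quadForm_mulVec_right {n : ℕ} (L₂ : Fin n → (E →L[ℂ] E))
    (S T : Matrix (Fin n) (Fin n) (E →L[ℂ] E)) (L₁ : Fin n → (E →L[ℂ] E)) :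
    quadForm L₂ S (T.mulVec L₁) = quadForm L₂ (S * T) L₁ := by
  simp only [quadForm, Matrix.mulVec, dotProduct, Matrix.mul_apply,
    Finset.mul_sum, Finset.sum_mul]
  refine Finset.sum_congr rfl fun j _ => ?_
  rw [Finset.sum_comm]
  exact Finset.sum_congr rfl fun k _ => Finset.sum_congr rfl fun m _ => by
    noncomm_ring

lemma quadForm_mulVec_left {n : ℕ} (S T : Matrix (Fin n) (Fin n) (E →L[ℂ] E))
    (L₂ L₁ : Fin n → (E →L[ℂ] E)) :
    quadForm (S.mulVec L₂) T L₁ = quadForm L₂ (Sᴴ * T) L₁ := by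
  have h : ∀ j k : Fin n, star ((S.mulVec L₂) j) * T j k * L₁ k
      = ∑ m, star (L₂ m) * (star (S j m) * T j k) * L₁ k := by
    intro j k
    simp only [Matrix.mulVec, dotProduct, star_sum, Finset.sum_mul]
    exact Finset.sum_congr rfl fun m _ => by
      rw [StarMul.star_mul]; noncomm_ring
  simp only [quadForm, h, Matrix.mul_apply, Matrix.conjTranspose_apply,
    Finset.mul_sum, Finset.sum_mul]
  refine (Finset.sum_congr rfl fun j _ => Finset.sum_comm).trans ?_
  rw [Finset.sum_comm]
  exact Finset.sum_congr rfl fun m _ => Finset.sum_comm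

/- Associativity of the series product (underlying the series chains of
Gough–James, Section V.D): if `S₃` is an isometry then
`(G₃ ◁ G₂) ◁ G₁ = G₃ ◁ (G₂ ◁ G₁)` componentwise. -/
theorem series_assoc {n : ℕ}
    (S₁ S₂ S₃ : Matrix (Fin n) (Fin n) (E →L[ℂ] E)) (L₁ L₂ L₃ : Fin n → (E →L[ℂ] E))
    (H₁ H₂ H₃ : E →L[ℂ] E)
    (hS₃ : S₃ᴴ * S₃ = 1)
    (hH₁ : IsSelfAdjoint H₁) (hH₂ : IsSelfAdjoint H₂) (hH₃ : IsSelfAdjoint H₃) :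
    seriesS (seriesS S₃ S₂) S₁ = seriesS S₃ (seriesS S₂ S₁) ∧
    seriesL (seriesS S₃ S₂) (seriesL S₃ L₃ L₂) L₁ =
      seriesL S₃ L₃ (seriesL S₂ L₂ L₁) ∧
    seriesH (seriesS S₃ S₂) (seriesL S₃ L₃ L₂) L₁ H₁ (seriesH S₃ L₃ L₂ H₂ H₃) =
      seriesH S₃ L₃ (seriesL S₂ L₂ L₁) (seriesH S₂ L₂ L₁ H₁ H₂) H₃ := by
  refine ⟨by simp [seriesS, mul_assoc], ?_, ?_⟩
  · funext j
    have hmv : S₃ *ᵥ seriesL S₂ L₂ L₁ = S₃ *ᵥ L₂ + S₃ *ᵥ (S₂ *ᵥ L₁) := by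
      rw [show seriesL S₂ L₂ L₁ = L₂ + S₂ *ᵥ L₁ from rfl, Matrix.mulVec_add]
    simp [seriesL, seriesS, hmv, Matrix.mulVec_add, ← Matrix.mulVec_mulVec, add_assoc]
  · set X := quadForm L₃ S₃ L₂ with hX
    set Y := quadForm (seriesL S₃ L₃ L₂) (seriesS S₃ S₂) L₁ with hY
    set Z := quadForm L₂ S₂ L₁ with hZ
    set W := quadForm L₃ S₃ (seriesL S₂ L₂ L₁) with hW
    have key : X + Y = Z + W := by
      have hY' : Y = quadForm L₃ (S₃ * S₂) L₁ + Z := by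
        rw [hY, hZ, seriesS]
        have : seriesL S₃ L₃ L₂ = fun j => L₃ j + S₃.mulVec L₂ j := rfl
        rw [this, quadForm_add_left, quadForm_mulVec_left, ← mul_assoc, hS₃, one_mul]
      have hW' : W = X + quadForm L₃ (S₃ * S₂) L₁ := by
        have : seriesL S₂ L₂ L₁ = fun j => L₂ j + S₂.mulVec L₁ j := rfl
        rw [hW, this, quadForm_add_right, quadForm_mulVec_right, hX]
      rw [hY', hW']; abel
    have hstar : star X + star Y = star Z + star W := by
      rw [← star_add, key, star_add]
    simp only [seriesH, ← hX, ← hY, ← hZ, ← hW]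
    have h2 : ((2 * Complex.I)⁻¹) • (X - star X) + ((2 * Complex.I)⁻¹) • (Y - star Y) =
        ((2 * Complex.I)⁻¹) • (Z - star Z) + ((2 * Complex.I)⁻¹) • (W - star W) := by
      rw [← smul_add, ← smul_add]
      congr 1
      have e1 : X - star X + (Y - star Y) = (X + Y) - (star X + star Y) := by abel
      have e2 : Z - star Z + (W - star W) = (Z + W) - (star Z + star W) := by abel
      rw [e1, e2, key, hstar]
    calc H₁ + (H₂ + H₃ + (2 * Complex.I)⁻¹ • (X - star X)) +
          (2 * Complex.I)⁻¹ • (Y - star Y)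
        = H₁ + H₂ + H₃ + ((2 * Complex.I)⁻¹ • (X - star X) +
            (2 * Complex.I)⁻¹ • (Y - star Y)) := by abel
      _ = H₁ + H₂ + H₃ + ((2 * Complex.I)⁻¹ • (Z - star Z) +
            (2 * Complex.I)⁻¹ • (W - star W)) := by rw [h2]
      _ = H₁ + H₂ + (2 * Complex.I)⁻¹ • (Z - star Z) + H₃ +
            (2 * Complex.I)⁻¹ • (W - star W) := by abel
end
end
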